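/- Let A be an associative k-algebra and a_1, …, a_m ∈ A. If P_{≤ M_{d,m}}(a_1,…,a_m) ⊆ P_{≤ d−1}(a_1,…,a_m) for some d ≥ 1, then every element of the subspace k a_1 + … + k a_m is algebraic of degree at most M_{d,m}. -/

import Mathlib

/-- `pWord a i` is the polynomial `p_{i_1,…,i_m}(a_1,…,a_m)`: the sum, over all distinct
words in `m` letters containing exactly `i_j` occurrences of letter `j` for each `j`,
of the corresponding products of `a_1,…,a_m`. -/
noncomputable def pWord {A : Type*} [Ring A] {m : ℕ} (a : Fin m → A) (i : Fin m → ℕ) : A :=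
  ∑ w ∈ (Finset.univ : Finset (Fin (∑ j, i j) → Fin m)).filter
      (fun w => ∀ j, (List.ofFn w).count j = i j),
    ((List.ofFn w).map a).prod

/-- `Pdeg k a n` is `P_n(a_1,…,a_m)`, the `k`-span of
`{p_{i_1,…,i_m}(a_1,…,a_m) : i_1+…+i_m = n}`. -/
noncomputable def Pdeg (k : Type*) [Field k] {A : Type*} [Ring A] [Algebra k A]
    {m : ℕ} (a : Fin m → A) (n : ℕ) : Submodule k A :=
  Submodule.span k {x | ∃ i : Fin m → ℕ, (∑ j, i j) = n ∧ x = pWord a i}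

open Finset

section aux
variable {k : Type*} [Field k] {A : Type*} [Ring A] [Algebra k A] {m : ℕ}

lemma pow_sum_eq (x : Fin m → A) (n : ℕ) :
    (∑ j, x j) ^ n = ∑ w : Fin n → Fin m, ((List.ofFn w).map x).prod := by
  induction n with
  | zero => simp
  | succ n ih =>
    rw [pow_succ', ih, Finset.mul_sum]
    rw [← Fintype.sum_equiv (Fin.consEquiv (fun _ : Fin (n+1) => Fin m))
      (fun p => ((List.ofFn (Fin.cons p.1 p.2 : Fin (n+1) → Fin m)).map x).prod)
      (fun w => ((List.ofFn w).map x).prod) (fun p => rfl)]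
    rw [Fintype.sum_prod_type]
    rw [Finset.sum_comm]
    refine Finset.sum_congr rfl fun w _ => ?_
    rw [Finset.sum_mul]
    refine Finset.sum_congr rfl fun j _ => ?_
    simp [List.ofFn_succ, Fin.cons_succ]

lemma list_smul_prod (c : Fin m → k) (a : Fin m → A) :
    ∀ l : List (Fin m), (l.map fun j => c j • a j).prod = (l.map c).prod • (l.map a).prod := by
  intro l
  induction l with
  | nil => simp
  | cons j l ih =>
    simp only [List.map_cons, List.prod_cons, ih, smul_mul_smul_comm]

lemma sum_count_eq_length (l : List (Fin m)) : ∑ j, l.count j = l.length := by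
  induction l with
  | nil => simp
  | cons x l ih =>
    have hc : ∀ j : Fin m, (x :: l).count j = l.count j + if x = j then 1 else 0 := fun j => by
      by_cases hxj : x = j <;> simp [List.count_cons, hxj]
    rw [Finset.sum_congr rfl fun j _ => hc j, Finset.sum_add_distrib, ih,
      Finset.sum_ite_eq Finset.univ x (fun _ => 1)]
    simp

lemma prod_map_eq_prod_pow_count (c : Fin m → k) (l : List (Fin m)) :
    (l.map c).prod = ∏ j, c j ^ l.count j := by
  classical
  rw [Finset.prod_list_map_count]
  refine Finset.prod_subset (Finset.subset_univ _) ?_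
  intro x _ hx
  have : l.count x = 0 := by
    rw [List.count_eq_zero]
    exact fun hmem => hx (List.mem_toFinset.2 hmem)
  simp [this]

lemma pWord_eq_of_sum {a : Fin m → A} {i : Fin m → ℕ} {n : ℕ} (h : (∑ j, i j) = n) :
    pWord a i = ∑ w ∈ (Finset.univ : Finset (Fin n → Fin m)).filter
      (fun w => ∀ j, (List.ofFn w).count j = i j), ((List.ofFn w).map a).prod := by
  subst h; rfl

lemma pow_mem_Pdeg {a : Fin m → A} {u : A} (hu : u ∈ Submodule.span k (Set.range a)) (n : ℕ) :
    u ^ n ∈ Pdeg k a n := by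
  classical
  obtain ⟨c, rfl⟩ := (Submodule.mem_span_range_iff_exists_fun k).1 hu
  rw [pow_sum_eq]
  have hterm : ∀ w : Fin n → Fin m, ((List.ofFn w).map fun j => c j • a j).prod
      = (∏ j, c j ^ (List.ofFn w).count j) • ((List.ofFn w).map a).prod := by
    intro w
    rw [list_smul_prod, prod_map_eq_prod_pow_count]
  simp_rw [hterm]
  rw [← Finset.sum_fiberwise_of_maps_to (g := fun w : Fin n → Fin m => fun j => (List.ofFn w).count j)
    (t := Finset.univ.image (fun w : Fin n → Fin m => fun j => (List.ofFn w).count j))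
    (fun w _ => Finset.mem_image_of_mem _ (Finset.mem_univ w))]
  refine Submodule.sum_mem _ fun i hi => ?_
  obtain ⟨w0, _, rfl⟩ := Finset.mem_image.1 hi
  have hsum : (∑ j, (List.ofFn w0).count j) = n := by
    rw [sum_count_eq_length, List.length_ofFn]
  have hfilter : ∀ w : Fin n → Fin m,
      ((fun j => (List.ofFn w).count j) = fun j => (List.ofFn w0).count j)
        ↔ ∀ j, (List.ofFn w).count j = (fun j => (List.ofFn w0).count j) j := by
    intro w; constructor
    · intro he j; exact congrFun he j
    · intro he; funext j; exact he j
  have : ∑ w ∈ Finset.univ.filter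
        (fun w : Fin n → Fin m => (fun j => (List.ofFn w).count j) = fun j => (List.ofFn w0).count j),
        (∏ j, c j ^ (List.ofFn w).count j) • ((List.ofFn w).map a).prod
      = (∏ j, c j ^ (List.ofFn w0).count j) • pWord a (fun j => (List.ofFn w0).count j) := by
    rw [pWord_eq_of_sum hsum, Finset.smul_sum]
    refine Finset.sum_congr ?_ fun w hw => ?_
    · apply Finset.filter_congr; intro w _; simpa using hfilter w
    · obtain ⟨-, hw⟩ := Finset.mem_filter.1 hw
      congr 1
      exact Finset.prod_congr rfl fun j _ => by rw [hw j]
  rw [this]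
  exact Submodule.smul_mem _ _ (Submodule.subset_span ⟨_, hsum, rfl⟩)


lemma chain_lemma (u : A) (M r : ℕ) (V : Submodule k A) [FiniteDimensional k V]
    (hVr : Module.finrank k V ≤ r) (hrM : r < M)
    (hu : ∀ n, 1 ≤ n → n ≤ M → u ^ n ∈ V) :
    u ^ M ∈ Submodule.span k ((fun i : ℕ => u ^ i) '' Set.Icc 1 (M - 1)) := by
  classical
  set W : ℕ → Submodule k A := fun n => Submodule.span k ((fun i : ℕ => u ^ i) '' Set.Icc 1 n)
    with hW
  have hWmono : Monotone W := fun s t hst =>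
    Submodule.span_mono (Set.image_mono (Set.Icc_subset_Icc_right hst))
  have hWfd : ∀ n, FiniteDimensional k (W n) := fun n =>
    FiniteDimensional.span_of_finite k ((Set.finite_Icc 1 n).image _)
  have hWV : ∀ n, n ≤ M → W n ≤ V := by
    intro n hn
    rw [hW]
    refine Submodule.span_le.2 ?_
    rintro x ⟨i, ⟨hi1, hi2⟩, rfl⟩
    exact hu i hi1 (hi2.trans hn)
  -- find a stabilization point
  have hstab : ∃ t, t < M ∧ W t = W (t + 1) := by
    by_contra hcon
    push_neg at hcon
    have hlt : ∀ t, t < M → W t < W (t + 1) := fun t ht =>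
      lt_of_le_of_ne (hWmono (Nat.le_succ t)) (hcon t ht)
    have hrank : ∀ t, t ≤ M → t ≤ Module.finrank k (W t) := by
      intro t
      induction t with
      | zero => intro _; exact Nat.zero_le _
      | succ t ih =>
        intro hts
        have h1 : t ≤ Module.finrank k (W t) := ih (Nat.le_of_succ_le hts)
        have h2 : Module.finrank k (W t) < Module.finrank k (W (t + 1)) := by
          have := hWfd (t + 1)
          exact Submodule.finrank_lt_finrank_of_lt (hlt t (Nat.lt_of_succ_le hts))
        omega
    have h1 : M ≤ Module.finrank k (W M) := hrank M le_rfl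
    have h2 : Module.finrank k (W M) ≤ Module.finrank k V :=
      Submodule.finrank_mono (hWV M le_rfl)
    omega
  obtain ⟨t, htM, hts⟩ := hstab
  -- W t is stable under multiplication by u on powers
  have hmul : ∀ x ∈ W t, u * x ∈ W t := by
    have hle : W t ≤ (W t).comap (LinearMap.mulLeft k u) := by
      rw [hW]
      refine Submodule.span_le.2 ?_
      rintro x ⟨i, ⟨hi1, hi2⟩, rfl⟩
      refine Submodule.mem_comap.2 ?_
      rw [LinearMap.mulLeft_apply, ← pow_succ', show (fun n => Submodule.span k
        ((fun i : ℕ => u ^ i) '' Set.Icc 1 n)) t = W (t + 1) from hts]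
      exact Submodule.subset_span ⟨i + 1, ⟨by omega, by omega⟩, rfl⟩
    intro x hx
    exact hle hx
  have hpow : ∀ n, 1 ≤ n → u ^ n ∈ W t := by
    intro n
    induction n with
    | zero => omega
    | succ n ih =>
      intro _
      by_cases hn : 1 ≤ n
      · rw [pow_succ']
        exact hmul _ (ih hn)
      · have : n = 0 := by omega
        subst this
        rw [hts]
        exact Submodule.subset_span ⟨1, ⟨le_rfl, by omega⟩, pow_one u ▸ rfl⟩
  have h1M : 1 ≤ M := by omega
  exact hWmono (by omega : t ≤ M - 1) (hpow M h1M)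

end aux

/-- If `P_{≤ M_{d,m}}(a_1,…,a_m) ⊆ P_{≤ d−1}(a_1,…,a_m)` for some `d ≥ 1`, where
`M_{d,m} = C(d+m−1, m)`, then every element of the subspace `k a_1 + … + k a_m` is
algebraic of degree at most `M_{d,m}`. -/
theorem algebraic_of_Ple_M_le_Ple
    (k : Type*) [Field k] (A : Type*) [Ring A] [Algebra k A]
    (m d : ℕ) (hd : 1 ≤ d) (a : Fin m → A)
    (h : (⨆ n ∈ Finset.Icc 1 ((d + m - 1).choose m), Pdeg k a n) ≤
      ⨆ n ∈ Finset.Icc 1 (d - 1), Pdeg k a n) :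
    ∀ u ∈ Submodule.span k (Set.range a),
      u ^ ((d + m - 1).choose m) ∈
        Submodule.span k ((fun i : ℕ => u ^ i) '' Set.Icc 1 ((d + m - 1).choose m - 1)) := by
  classical
  intro u hu
  set M := (d + m - 1).choose m with hM
  let E := Sym.equivNatSumOfFintype (Fin (m + 1)) (d - 1)
  let q : Sym (Fin (m + 1)) (d - 1) → Prop := fun s => Fin.tail (E s : Fin (m + 1) → ℕ) ≠ 0
  let g : {s // q s} → A := fun s => pWord a (Fin.tail (E s.1 : Fin (m + 1) → ℕ))
  -- the big span is contained in the span of the range of g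
  have hVg : (⨆ n ∈ Finset.Icc 1 (d - 1), Pdeg k a n) ≤ Submodule.span k (Set.range g) := by
    refine iSup₂_le fun n hn => ?_
    rw [Finset.mem_Icc] at hn
    refine Submodule.span_le.2 ?_
    rintro x ⟨i, hsum, rfl⟩
    have hP : (∑ j, (Fin.cons (d - 1 - n) i : Fin (m + 1) → ℕ) j) = d - 1 := by
      rw [Fin.sum_cons, hsum]; omega
    have hq : q (E.symm ⟨Fin.cons (d - 1 - n) i, hP⟩) := by
      show Fin.tail (E (E.symm ⟨Fin.cons (d - 1 - n) i, hP⟩) : Fin (m + 1) → ℕ) ≠ 0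
      rw [Equiv.apply_symm_apply]
      simp only [Fin.tail_cons]
      intro h0
      rw [h0] at hsum
      simp at hsum
      omega
    refine Submodule.subset_span ⟨⟨E.symm ⟨Fin.cons (d - 1 - n) i, hP⟩, hq⟩, ?_⟩
    show pWord a (Fin.tail (E (E.symm ⟨Fin.cons (d - 1 - n) i, hP⟩) : Fin (m + 1) → ℕ)) = _
    rw [Equiv.apply_symm_apply]
    simp only [Fin.tail_cons]
  -- counting
  have hcard : Fintype.card {s // q s} < M := by
    have h0 : ¬ q (E.symm ⟨Fin.cons (d - 1) 0, by rw [Fin.sum_cons]; simp⟩) := by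
      show ¬ Fin.tail (E (E.symm _) : Fin (m + 1) → ℕ) ≠ 0
      rw [Equiv.apply_symm_apply]
      simp [Fin.tail_cons]
    have hlt := Fintype.card_subtype_lt (p := q) h0
    have hsym : Fintype.card (Sym (Fin (m + 1)) (d - 1)) = M := by
      rw [Sym.card_sym_eq_choose, Fintype.card_fin]
      have e1 : m + 1 + (d - 1) - 1 = d + m - 1 := by omega
      have e2 : d - 1 = (d + m - 1) - m := by omega
      rw [e1, hM, e2, Nat.choose_symm (by omega)]
    omega
  have hfd : FiniteDimensional k (Submodule.span k (Set.range g)) :=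
    FiniteDimensional.span_of_finite k (Set.finite_range g)
  have hfr : Module.finrank k (Submodule.span k (Set.range g)) ≤ Fintype.card {s // q s} :=
    finrank_range_le_card g
  refine chain_lemma u M (Fintype.card {s // q s}) (Submodule.span k (Set.range g)) hfr hcard ?_
  intro n hn1 hnM
  have h1 : u ^ n ∈ Pdeg k a n := pow_mem_Pdeg hu n
  have h2 : Pdeg k a n ≤ ⨆ n ∈ Finset.Icc 1 M, Pdeg k a n :=
    le_iSup₂ (f := fun n _ => Pdeg k a n) n (Finset.mem_Icc.2 ⟨hn1, hnM⟩)
  exact hVg (h (h2 h1))
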